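/- Let G be a directed partially ordered group and n ≥ 1. Then the pseudo-effect algebra E = Γ(ℤ ⃗× G, (n,0)) admits exactly one state, namely s(i,g) = i/n, and this state is an (n+1)-valued discrete state (and hence extremal). -/

import Mathlib

/-- A pseudo-effect algebra (PEA): a structure with a partial addition `add`
(with domain of definition `D`), a zero and a one, satisfying (PE1)-(PE4)
together with the (derivable) neutrality of zero. -/
structure PEA (E : Type) where
  /-- `D a b` means that the partial sum `a + b` is defined. -/
  D : E → E → Prop
  /-- The partial addition (its value is relevant only when `D a b` holds). -/
  add : E → E → E
  zero : E
  one : E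
  /-- (PE1), definedness part. -/
  assoc_defined : ∀ a b c, (D a b ∧ D (add a b) c) ↔ (D b c ∧ D a (add b c))
  /-- (PE1), equality part. -/
  assoc_eq : ∀ a b c, D a b → D (add a b) c → add (add a b) c = add a (add b c)
  /-- (PE2), right complement. -/
  compl_right : ∀ a, ∃! d, D a d ∧ add a d = one
  /-- (PE2), left complement. -/
  compl_left : ∀ a, ∃! e, D e a ∧ add e a = one
  /-- (PE3). -/
  pe3 : ∀ a b, D a b →
    (∃ d, D d a ∧ add d a = add a b) ∧ (∃ e, D b e ∧ add b e = add a b)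
  /-- (PE4). -/
  pe4_right : ∀ a, D a one → a = zero
  pe4_left : ∀ a, D one a → a = zero
  D_zero_right : ∀ a, D a zero
  D_zero_left : ∀ a, D zero a
  add_zero : ∀ a, add a zero = a
  zero_add : ∀ a, add zero a = a

namespace PEA

variable {E : Type} (P : PEA E)

/-- The induced partial order: `a ≤ b` iff `a + c = b` for some `c`. -/
def le (a b : E) : Prop := ∃ c, P.D a c ∧ P.add a c = b

/-- The left complement `a⁻`, the unique element with `a⁻ + a = 1`. -/
noncomputable def lneg (a : E) : E := (P.compl_left a).choose

/-- The right complement `a~`, the unique element with `a + a~ = 1`. -/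
noncomputable def rneg (a : E) : E := (P.compl_right a).choose

/-- `E` is weakly commutative if `a + b` is defined iff `b + a` is defined. -/
def WeaklyCommutative : Prop := ∀ a b, P.D a b ↔ P.D b a

/-- `E` is symmetric if the two complements coincide. -/
def Symmetric : Prop := ∀ a, P.lneg a = P.rneg a

/-- A state on a PEA: a `[0,1]`-valued map, additive on existing sums, sending
`0 ↦ 0` and `1 ↦ 1`. -/
def IsState (s : E → ℝ) : Prop :=
  s P.zero = 0 ∧ s P.one = 1 ∧ (∀ a, 0 ≤ s a ∧ s a ≤ 1) ∧
    ∀ a b, P.D a b → s (P.add a b) = s a + s b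

/-- An `(n+1)`-valued discrete state: a state whose range is `{0, 1/n, …, 1}`. -/
def IsDiscreteState (n : ℕ) (s : E → ℝ) : Prop :=
  P.IsState s ∧ Set.range s = {x : ℝ | ∃ i ≤ n, x = (i : ℝ) / n}

/-- An ideal: a nonempty downward closed subset closed under existing sums. -/
def IsIdeal (I : Set E) : Prop :=
  I.Nonempty ∧ (∀ a i, i ∈ I → P.le a i → a ∈ I) ∧
    ∀ i j, i ∈ I → j ∈ I → P.D i j → P.add i j ∈ I

/-- A normal ideal: `a + i = j + a` implies `i ∈ I ↔ j ∈ I`. -/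
def IsNormalIdeal (I : Set E) : Prop :=
  P.IsIdeal I ∧ ∀ a i j, P.D a i → P.D j a → P.add a i = P.add j a → (i ∈ I ↔ j ∈ I)

/-- A maximal ideal: proper and not properly contained in a proper ideal. -/
def IsMaximalIdeal (I : Set E) : Prop :=
  P.IsIdeal I ∧ P.one ∉ I ∧ ∀ J, P.IsIdeal J → P.one ∉ J → I ⊆ J → I = J

/-- `n`-fold partial multiple of an element. -/
def nmul : ℕ → E → E
  | 0, _ => P.zero
  | k + 1, a => P.add (nmul k a) a

/-- Definedness of the `n`-fold partial multiple. -/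
def nmulD : ℕ → E → Prop
  | 0, _ => True
  | k + 1, a => nmulD k a ∧ P.D (P.nmul k a) a

/-- The set of elements of infinite isotropic index. -/
def Infinit : Set E := {a | ∀ k, P.nmulD k a}

/-- An `n`-decomposition of a PEA. -/
def IsNDecomp (n : ℕ) (F : ℕ → Set E) : Prop :=
  (∀ i, i ≤ n → (F i).Nonempty) ∧
  (∀ i j, i ≤ n → j ≤ n → i ≠ j → F i ∩ F j = ∅) ∧
  ((⋃ i ∈ Set.Iic n, F i) = Set.univ) ∧
  (∀ i, i ≤ n → P.lneg '' F i = F (n - i) ∧ P.rneg '' F i = F (n - i)) ∧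
  (∀ i j, i ≤ n → j ≤ n → ∀ x ∈ F i, ∀ y ∈ F j, P.D x y →
     i + j ≤ n ∧ P.add x y ∈ F (i + j))

/-- An `n`-perfect PEA: an `n`-decomposition with all sums `Eᵢ + Eⱼ`, `i+j < n`,
existing, and whose bottom slice is the unique maximal ideal. -/
def IsNPerfect (n : ℕ) (F : ℕ → Set E) : Prop :=
  P.IsNDecomp n F ∧
  (∀ i j, i + j < n → ∀ x ∈ F i, ∀ y ∈ F j, P.D x y) ∧
  (P.IsMaximalIdeal (F 0) ∧ ∀ J, P.IsMaximalIdeal J → J = F 0)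

end PEA

set_option linter.unusedSectionVars false
section IntervalPEA

variable {H : Type} [AddGroup H] [PartialOrder H]
  [CovariantClass H H (· + ·) (· ≤ ·)]
  [CovariantClass H H (Function.swap (· + ·)) (· ≤ ·)]

/-- The carrier of the interval `Γ(H, u) = [0, u]` in a po-group `H`. -/
def GammaSet (u : H) : Type := {x : H // 0 ≤ x ∧ x ≤ u}

namespace GammaInterval

variable (u : H) (hu : 0 ≤ u)

/-- Definedness of the partial addition of `Γ(H,u)`. -/
def gD (a b : GammaSet u) : Prop := a.1 + b.1 ≤ u

open Classical in
/-- The partial addition of `Γ(H,u)` (junk value `0` outside its domain). -/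
noncomputable def gadd (a b : GammaSet u) : GammaSet u :=
  if h : a.1 + b.1 ≤ u then ⟨a.1 + b.1, add_nonneg a.2.1 b.2.1, h⟩
  else ⟨0, le_refl 0, hu⟩

lemma gadd_val {a b : GammaSet u} (h : gD u a b) :
    (gadd u hu a b).1 = a.1 + b.1 := by
  have h' : a.1 + b.1 ≤ u := h
  exact congrArg Subtype.val
    (dif_pos h' : gadd u hu a b = ⟨a.1 + b.1, add_nonneg a.2.1 b.2.1, h'⟩)

/-- The interval `Γ(H, u)` as a pseudo-effect algebra. -/
noncomputable def Gamma : PEA (GammaSet u) where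
  D := gD u
  add := gadd u hu
  zero := ⟨0, le_refl 0, hu⟩
  one := ⟨u, hu, le_refl u⟩
  assoc_defined := by
    intro a b c
    constructor
    · rintro ⟨h1, h2⟩
      have h2a : (gadd u hu a b).1 + c.1 ≤ u := h2
      have h2' : a.1 + b.1 + c.1 ≤ u := by rwa [gadd_val u hu h1] at h2a
      have h3 : a.1 + (b.1 + c.1) ≤ u := by rwa [← add_assoc]
      have hbc : gD u b c := le_trans (le_add_of_nonneg_left a.2.1) h3
      refine ⟨hbc, ?_⟩
      show a.1 + (gadd u hu b c).1 ≤ u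
      rwa [gadd_val u hu hbc]
    · rintro ⟨h1, h2⟩
      have h2a : a.1 + (gadd u hu b c).1 ≤ u := h2
      have h2' : a.1 + (b.1 + c.1) ≤ u := by rwa [gadd_val u hu h1] at h2a
      have hab : gD u a b :=
        le_trans (add_le_add_right (le_add_of_nonneg_right c.2.1) a.1) h2'
      refine ⟨hab, ?_⟩
      show (gadd u hu a b).1 + c.1 ≤ u
      rw [gadd_val u hu hab, add_assoc]
      exact h2'
  assoc_eq := by
    intro a b c h1 h2
    have h2' : a.1 + b.1 + c.1 ≤ u := by
      have h2a : (gadd u hu a b).1 + c.1 ≤ u := h2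
      rwa [gadd_val u hu h1] at h2a
    have h3 : a.1 + (b.1 + c.1) ≤ u := by rwa [← add_assoc]
    have hbc : gD u b c := le_trans (le_add_of_nonneg_left a.2.1) h3
    have habc : gD u a (gadd u hu b c) := by
      show a.1 + (gadd u hu b c).1 ≤ u
      rwa [gadd_val u hu hbc]
    apply Subtype.ext
    rw [gadd_val u hu h2, gadd_val u hu h1, gadd_val u hu habc, gadd_val u hu hbc,
      add_assoc]
  compl_right := by
    intro a
    have h1 : (0 : H) ≤ -a.1 + u := by
      rw [le_neg_add_iff_add_le, add_zero]; exact a.2.2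
    have h2 : -a.1 + u ≤ u := by
      simpa using add_le_add_right (neg_nonpos.mpr a.2.1) u
    have hD : gD u a ⟨-a.1 + u, h1, h2⟩ := by
      show a.1 + (-a.1 + u) ≤ u
      rw [add_neg_cancel_left]
    refine ⟨⟨-a.1 + u, h1, h2⟩, ⟨hD, ?_⟩, ?_⟩
    · apply Subtype.ext
      rw [gadd_val u hu hD]
      exact add_neg_cancel_left a.1 u
    · rintro y ⟨hy1, hy2⟩
      apply Subtype.ext
      have hv := congrArg Subtype.val hy2
      rw [gadd_val u hu hy1] at hv
      show y.1 = -a.1 + u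
      rw [eq_neg_add_iff_add_eq]
      exact hv
  compl_left := by
    intro a
    have h1 : (0 : H) ≤ u + -a.1 := by
      simpa using add_le_add_right a.2.2 (-a.1)
    have h2 : u + -a.1 ≤ u := by
      simpa using add_le_add_left (neg_nonpos.mpr a.2.1) u
    have hD : gD u ⟨u + -a.1, h1, h2⟩ a := by
      show (u + -a.1) + a.1 ≤ u
      rw [neg_add_cancel_right]
    refine ⟨⟨u + -a.1, h1, h2⟩, ⟨hD, ?_⟩, ?_⟩
    · apply Subtype.ext
      rw [gadd_val u hu hD]
      exact neg_add_cancel_right u a.1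
    · rintro y ⟨hy1, hy2⟩
      apply Subtype.ext
      have hv := congrArg Subtype.val hy2
      rw [gadd_val u hu hy1] at hv
      show y.1 = u + -a.1
      rw [eq_add_neg_iff_add_eq]
      exact hv
  pe3 := by
    intro a b h
    constructor
    · have h1 : (0 : H) ≤ a.1 + b.1 + -a.1 := by
        have : a.1 + 0 + -a.1 ≤ a.1 + b.1 + -a.1 :=
          add_le_add_left (add_le_add_right b.2.1 a.1) (-a.1)
        simpa using this
      have h2 : a.1 + b.1 + -a.1 ≤ u := by
        calc a.1 + b.1 + -a.1 ≤ u + -a.1 := add_le_add_left h (-a.1)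
          _ ≤ u + 0 := add_le_add_right (neg_nonpos.mpr a.2.1) u
          _ = u := add_zero u
      have hD : gD u ⟨a.1 + b.1 + -a.1, h1, h2⟩ a := by
        show (a.1 + b.1 + -a.1) + a.1 ≤ u
        rw [neg_add_cancel_right]
        exact h
      refine ⟨⟨a.1 + b.1 + -a.1, h1, h2⟩, hD, ?_⟩
      apply Subtype.ext
      rw [gadd_val u hu hD, gadd_val u hu h]
      exact neg_add_cancel_right (a.1 + b.1) a.1
    · have h1 : (0 : H) ≤ -b.1 + (a.1 + b.1) := by
        have : -b.1 + b.1 ≤ -b.1 + (a.1 + b.1) :=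
          add_le_add_right (le_add_of_nonneg_left a.2.1) (-b.1)
        simpa using this
      have h2 : -b.1 + (a.1 + b.1) ≤ u := by
        calc -b.1 + (a.1 + b.1) ≤ -b.1 + u := add_le_add_right h (-b.1)
          _ ≤ 0 + u := add_le_add_left (neg_nonpos.mpr b.2.1) u
          _ = u := zero_add u
      have hD : gD u b ⟨-b.1 + (a.1 + b.1), h1, h2⟩ := by
        show b.1 + (-b.1 + (a.1 + b.1)) ≤ u
        rw [add_neg_cancel_left]
        exact h
      refine ⟨⟨-b.1 + (a.1 + b.1), h1, h2⟩, hD, ?_⟩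
      apply Subtype.ext
      rw [gadd_val u hu hD, gadd_val u hu h]
      exact add_neg_cancel_left b.1 (a.1 + b.1)
  pe4_right := by
    intro a h
    apply Subtype.ext
    have h' : a.1 + u ≤ u := h
    have h'' : a.1 + u + -u ≤ u + -u := add_le_add_left h' (-u)
    simp only [add_neg_cancel_right, add_neg_cancel] at h''
    exact le_antisymm h'' a.2.1
  pe4_left := by
    intro a h
    apply Subtype.ext
    have h' : u + a.1 ≤ u := h
    have h'' : -u + (u + a.1) ≤ -u + u := add_le_add_right h' (-u)
    simp only [neg_add_cancel_left, neg_add_cancel] at h''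
    exact le_antisymm h'' a.2.1
  D_zero_right := by
    intro a
    show a.1 + 0 ≤ u
    simpa using a.2.2
  D_zero_left := by
    intro a
    show 0 + a.1 ≤ u
    simpa using a.2.2
  add_zero := by
    intro a
    apply Subtype.ext
    have h : gD u a ⟨0, le_refl 0, hu⟩ := by
      show a.1 + 0 ≤ u; simpa using a.2.2
    rw [gadd_val u hu h]
    exact add_zero a.1
  zero_add := by
    intro a
    apply Subtype.ext
    have h : gD u ⟨0, le_refl 0, hu⟩ a := by
      show 0 + a.1 ≤ u; simpa using a.2.2
    rw [gadd_val u hu h]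
    exact zero_add a.1

end GammaInterval

end IntervalPEA

section ZLexSection

/-- The lexicographic product `ℤ ⃗× G`. -/
def ZLex (G : Type) : Type := ℤ × G

namespace ZLex

variable {G : Type} [AddGroup G] [PartialOrder G]
  [CovariantClass G G (· + ·) (· ≤ ·)]
  [CovariantClass G G (Function.swap (· + ·)) (· ≤ ·)]

instance : AddGroup (ZLex G) := inferInstanceAs (AddGroup (ℤ × G))

/-- Build an element of `ℤ ⃗× G`. -/
def mk (i : ℤ) (g : G) : ZLex G := ((i, g) : ℤ × G)

/-- First (integer) component. -/
def idx (x : ZLex G) : ℤ := (x : ℤ × G).1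

/-- Second (group) component. -/
def snd (x : ZLex G) : G := (x : ℤ × G).2

instance : PartialOrder (ZLex G) where
  le p q := idx p < idx q ∨ (idx p = idx q ∧ snd p ≤ snd q)
  le_refl p := Or.inr ⟨rfl, le_refl _⟩
  le_trans p q r := by
    rintro (h | ⟨e, h⟩) (h' | ⟨e', h'⟩)
    · exact Or.inl (lt_trans h h')
    · exact Or.inl (lt_of_lt_of_eq h e')
    · exact Or.inl (lt_of_eq_of_lt e h')
    · exact Or.inr ⟨e.trans e', le_trans h h'⟩
  le_antisymm p q := by
    rintro (h | ⟨e, h⟩) (h' | ⟨e', h'⟩)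
    · exact absurd (lt_trans h h') (lt_irrefl _)
    · exact absurd h (by rw [e']; exact lt_irrefl _)
    · exact absurd h' (by rw [e]; exact lt_irrefl _)
    · have h2 : snd p = snd q := le_antisymm h h'
      show ((idx p, snd p) : ℤ × G) = ((idx q, snd q) : ℤ × G)
      rw [e, h2]

lemma le_def (p q : ZLex G) :
    p ≤ q ↔ idx p < idx q ∨ (idx p = idx q ∧ snd p ≤ snd q) := Iff.rfl

lemma add_def (p q : ZLex G) :
    p + q = mk (idx p + idx q) (snd p + snd q) := rfl

instance : CovariantClass (ZLex G) (ZLex G) (· + ·) (· ≤ ·) := by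
  constructor
  rintro c a b (h | ⟨e, h⟩)
  · exact Or.inl (Int.add_lt_add_left h _)
  · exact Or.inr ⟨by show idx c + idx a = idx c + idx b; rw [e],
      add_le_add_right h _⟩

instance : CovariantClass (ZLex G) (ZLex G) (Function.swap (· + ·)) (· ≤ ·) := by
  constructor
  rintro c a b (h | ⟨e, h⟩)
  · exact Or.inl (Int.add_lt_add_right h _)
  · exact Or.inr ⟨by show idx a + idx c = idx b + idx c; rw [e],
      add_le_add_left h _⟩

end ZLex

end ZLexSection

/-- Extremal states on a PEA. -/
def PEA.IsExtremalState {E : Type} (P : PEA E) (s : E → ℝ) : Prop :=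
  P.IsState s ∧ ∀ (s₁ s₂ : E → ℝ) (α : ℝ), P.IsState s₁ → P.IsState s₂ →
    0 < α → α < 1 → (∀ x, s x = α * s₁ x + (1 - α) * s₂ x) → s₁ = s ∧ s₂ = s

section Stmt17Aux

variable {G : Type} [AddGroup G] [PartialOrder G]
  [CovariantClass G G (· + ·) (· ≤ ·)]
  [CovariantClass G G (Function.swap (· + ·)) (· ≤ ·)]

lemma stmt17_add_eq {H : Type} [AddGroup H] [PartialOrder H]
    [CovariantClass H H (· + ·) (· ≤ ·)]
    [CovariantClass H H (Function.swap (· + ·)) (· ≤ ·)]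
    (u : H) (hu : 0 ≤ u) :
    (GammaInterval.Gamma u hu).add = GammaInterval.gadd u hu := rfl

lemma stmt17_mem {n : ℕ} (i : ℤ) (g : G)
    (h0 : 0 < i ∨ (0 = i ∧ 0 ≤ g)) (h1 : i < (n : ℤ) ∨ (i = (n : ℤ) ∧ g ≤ 0)) :
    0 ≤ ZLex.mk i g ∧ ZLex.mk i g ≤ ZLex.mk (n : ℤ) (0 : G) :=
  ⟨h0, h1⟩

lemma stmt17_D {n : ℕ} {a b : GammaSet (ZLex.mk (n : ℤ) (0 : G))}
    (h : ZLex.idx a.1 + ZLex.idx b.1 < (n : ℤ) ∨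
      (ZLex.idx a.1 + ZLex.idx b.1 = (n : ℤ) ∧ ZLex.snd a.1 + ZLex.snd b.1 ≤ 0)) :
    GammaInterval.gD (ZLex.mk (n : ℤ) (0 : G)) a b := h

lemma stmt17_unique (hdir : ∀ a b : G, ∃ c : G, a ≤ c ∧ b ≤ c)
    (n : ℕ) (hn : 1 ≤ n) (hu : (0 : ZLex G) ≤ ZLex.mk (n : ℤ) (0 : G))
    (s : GammaSet (ZLex.mk (n : ℤ) (0 : G)) → ℝ)
    (hs : (GammaInterval.Gamma (ZLex.mk (n : ℤ) (0 : G)) hu).IsState s) :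
    ∀ x, s x = (ZLex.idx x.1 : ℝ) / (n : ℝ) := by
  obtain ⟨hz, ho, hbd, hadd⟩ := hs
  have hn' : (1 : ℤ) ≤ (n : ℤ) := by exact_mod_cast hn
  have hn0 : (0 : ℤ) < (n : ℤ) := lt_of_lt_of_le one_pos hn'
  have hnR : (n : ℝ) ≠ 0 := by positivity
  have idx0 : ∀ x : GammaSet (ZLex.mk (n : ℤ) (0 : G)), (0 : ℤ) ≤ ZLex.idx x.1 := by
    intro x
    rcases x.2.1 with h | ⟨h, _⟩
    · exact le_of_lt h
    · exact le_of_eq h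
  have idxn : ∀ x : GammaSet (ZLex.mk (n : ℤ) (0 : G)), ZLex.idx x.1 ≤ (n : ℤ) := by
    intro x
    rcases x.2.2 with h | ⟨h, _⟩
    · exact le_of_lt h
    · exact le_of_eq h
  -- Step A : elements of index 0 have state value 0
  have hA : ∀ x : GammaSet (ZLex.mk (n : ℤ) (0 : G)), ZLex.idx x.1 = 0 → s x = 0 := by
    intro x hx
    have hg : (0 : G) ≤ ZLex.snd x.1 := by
      rcases x.2.1 with h | ⟨_, h⟩
      · rw [hx] at h; exact absurd h (lt_irrefl 0)
      · exact h
    set g := ZLex.snd x.1 with hgdef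
    have memk : ∀ k : ℕ, 0 ≤ ZLex.mk (0 : ℤ) (k • g) ∧
        ZLex.mk (0 : ℤ) (k • g) ≤ ZLex.mk (n : ℤ) (0 : G) :=
      fun k => stmt17_mem _ _ (Or.inr ⟨rfl, nsmul_nonneg hg k⟩) (Or.inl hn0)
    set a : ℕ → GammaSet (ZLex.mk (n : ℤ) (0 : G)) :=
      fun k => ⟨ZLex.mk 0 (k • g), memk k⟩ with hadef
    have hx1 : x = a 1 := by
      apply Subtype.ext
      show x.1 = ZLex.mk 0 (1 • g)
      rw [one_nsmul]
      show x.1 = ZLex.mk 0 g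
      have : x.1 = ZLex.mk (ZLex.idx x.1) (ZLex.snd x.1) := rfl
      rw [this, hx]
    have hmul : ∀ k, s (a k) = k * s (a 1) := by
      intro k
      induction k with
      | zero =>
        have : a 0 = (GammaInterval.Gamma (ZLex.mk (n : ℤ) (0 : G)) hu).zero := by
          apply Subtype.ext
          show ZLex.mk 0 (0 • g) = (0 : ZLex G)
          rw [zero_nsmul]; rfl
        rw [this, hz]; simp
      | succ k ih =>
        have hD : GammaInterval.gD (ZLex.mk (n : ℤ) (0 : G)) (a k) (a 1) :=
          stmt17_D (Or.inl (by show (0 : ℤ) + 0 < (n : ℤ); simpa using hn0))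
        have hval : GammaInterval.gadd (ZLex.mk (n : ℤ) (0 : G)) hu (a k) (a 1) = a (k + 1) := by
          apply Subtype.ext
          rw [GammaInterval.gadd_val _ hu hD]
          show ZLex.mk 0 (k • g) + ZLex.mk 0 (1 • g) = ZLex.mk 0 ((k + 1) • g)
          rw [ZLex.add_def]
          show ZLex.mk (0 + 0) (k • g + 1 • g) = ZLex.mk 0 ((k + 1) • g)
          rw [add_zero, one_nsmul, ← succ_nsmul]
        have := hadd (a k) (a 1) hD
        rw [stmt17_add_eq] at this; rw [hval] at this
        rw [this, ih]
        push_cast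
        ring
    have hle1 : ∀ k : ℕ, (k : ℝ) * s (a 1) ≤ 1 := fun k => (hmul k) ▸ (hbd (a k)).2
    have hsle : s (a 1) ≤ 0 := by
      by_contra h
      push_neg at h
      obtain ⟨k, hk⟩ := exists_nat_gt (1 / s (a 1))
      have h2 : 1 < (k : ℝ) * s (a 1) := (div_lt_iff₀ h).mp hk
      linarith [hle1 k]
    rw [hx1]
    exact le_antisymm hsle (hbd (a 1)).1
  -- Step B : elements of index n have state value 1
  have hB : ∀ x : GammaSet (ZLex.mk (n : ℤ) (0 : G)), ZLex.idx x.1 = (n : ℤ) → s x = 1 := by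
    intro x hx
    have hg : ZLex.snd x.1 ≤ 0 := by
      rcases x.2.2 with h | ⟨_, h⟩
      · rw [hx] at h; exact absurd h (lt_irrefl _)
      · exact h
    set y : GammaSet (ZLex.mk (n : ℤ) (0 : G)) :=
      ⟨ZLex.mk 0 (-(ZLex.snd x.1)), stmt17_mem _ _ (Or.inr ⟨rfl, neg_nonneg.mpr hg⟩)
        (Or.inl hn0)⟩ with hydef
    have hD : GammaInterval.gD (ZLex.mk (n : ℤ) (0 : G)) x y :=
      stmt17_D (Or.inr ⟨by show ZLex.idx x.1 + 0 = (n : ℤ); rw [add_zero, hx],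
        by show ZLex.snd x.1 + -(ZLex.snd x.1) ≤ 0; rw [add_neg_cancel]⟩)
    have hval : GammaInterval.gadd (ZLex.mk (n : ℤ) (0 : G)) hu x y =
        (GammaInterval.Gamma (ZLex.mk (n : ℤ) (0 : G)) hu).one := by
      apply Subtype.ext
      rw [GammaInterval.gadd_val _ hu hD]
      show x.1 + ZLex.mk 0 (-(ZLex.snd x.1)) = ZLex.mk (n : ℤ) (0 : G)
      rw [ZLex.add_def]
      show ZLex.mk (ZLex.idx x.1 + 0) (ZLex.snd x.1 + -(ZLex.snd x.1)) = ZLex.mk (n : ℤ) (0 : G)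
      rw [add_zero, add_neg_cancel, hx]
    have := hadd x y hD
    rw [stmt17_add_eq] at this; rw [hval, ho, hA y rfl] at this
    linarith
  -- Step C : for index < n the value depends only on the index
  have key : ∀ z : GammaSet (ZLex.mk (n : ℤ) (0 : G)), ZLex.idx z.1 < (n : ℤ) →
      ∀ d : G, ZLex.snd z.1 ≤ d →
      ∀ hm : 0 ≤ ZLex.mk (ZLex.idx z.1) d ∧ ZLex.mk (ZLex.idx z.1) d ≤ ZLex.mk (n : ℤ) (0 : G),
      s ⟨ZLex.mk (ZLex.idx z.1) d, hm⟩ = s z := by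
    intro z hzlt d hd hm
    have hdn : (0 : G) ≤ -(ZLex.snd z.1) + d := by
      rw [le_neg_add_iff_add_le, add_zero]; exact hd
    set w : GammaSet (ZLex.mk (n : ℤ) (0 : G)) :=
      ⟨ZLex.mk 0 (-(ZLex.snd z.1) + d), stmt17_mem _ _ (Or.inr ⟨rfl, hdn⟩) (Or.inl hn0)⟩ with hwdef
    have hD : GammaInterval.gD (ZLex.mk (n : ℤ) (0 : G)) z w :=
      stmt17_D (Or.inl (by show ZLex.idx z.1 + 0 < (n : ℤ); rwa [add_zero]))
    have hval : GammaInterval.gadd (ZLex.mk (n : ℤ) (0 : G)) hu z w =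
        ⟨ZLex.mk (ZLex.idx z.1) d, hm⟩ := by
      apply Subtype.ext
      rw [GammaInterval.gadd_val _ hu hD]
      show z.1 + ZLex.mk 0 (-(ZLex.snd z.1) + d) = ZLex.mk (ZLex.idx z.1) d
      rw [ZLex.add_def]
      show ZLex.mk (ZLex.idx z.1 + 0) (ZLex.snd z.1 + (-(ZLex.snd z.1) + d)) =
        ZLex.mk (ZLex.idx z.1) d
      rw [add_zero, add_neg_cancel_left]
    have := hadd z w hD
    rw [stmt17_add_eq] at this; rw [hval, hA w rfl] at this
    rw [this, add_zero]
  -- Step D : value of (k, 0) for k ≤ n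
  have mem1 : 0 ≤ ZLex.mk (1 : ℤ) (0 : G) ∧ ZLex.mk (1 : ℤ) (0 : G) ≤ ZLex.mk (n : ℤ) (0 : G) :=
    stmt17_mem _ _ (Or.inl one_pos)
      ((lt_or_eq_of_le hn').elim Or.inl (fun e => Or.inr ⟨e.symm ▸ rfl, le_refl 0⟩))
  set e1 : GammaSet (ZLex.mk (n : ℤ) (0 : G)) := ⟨ZLex.mk 1 0, mem1⟩ with he1def
  have hDk : ∀ k : ℕ, ∀ hm : 0 ≤ ZLex.mk (k : ℤ) (0 : G) ∧
      ZLex.mk (k : ℤ) (0 : G) ≤ ZLex.mk (n : ℤ) (0 : G),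
      s ⟨ZLex.mk (k : ℤ) (0 : G), hm⟩ = k * s e1 := by
    intro k
    induction k with
    | zero =>
      intro hm
      have : (⟨ZLex.mk ((0 : ℕ) : ℤ) (0 : G), hm⟩ : GammaSet (ZLex.mk (n : ℤ) (0 : G))) =
          (GammaInterval.Gamma (ZLex.mk (n : ℤ) (0 : G)) hu).zero := by
        apply Subtype.ext; rfl
      rw [this, hz]; simp
    | succ k ih =>
      intro hm
      have hk1n : ((k : ℤ) + 1) ≤ (n : ℤ) := by
        rcases hm.2 with h | ⟨h, _⟩
        · have h' : ((k + 1 : ℕ) : ℤ) < (n : ℤ) := h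
          omega
        · have h' : ((k + 1 : ℕ) : ℤ) = (n : ℤ) := h
          omega
      have hmk : 0 ≤ ZLex.mk (k : ℤ) (0 : G) ∧
          ZLex.mk (k : ℤ) (0 : G) ≤ ZLex.mk (n : ℤ) (0 : G) :=
        stmt17_mem _ _
          ((Int.natCast_nonneg k).lt_or_eq.elim Or.inl (fun e => Or.inr ⟨e, le_refl 0⟩))
          (Or.inl (lt_of_lt_of_le (by linarith) hk1n))
      set ek : GammaSet (ZLex.mk (n : ℤ) (0 : G)) := ⟨ZLex.mk (k : ℤ) 0, hmk⟩ with hekdef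
      have hD : GammaInterval.gD (ZLex.mk (n : ℤ) (0 : G)) ek e1 := by
        apply stmt17_D
        rcases lt_or_eq_of_le hk1n with h | h
        · exact Or.inl (by show (k : ℤ) + 1 < (n : ℤ); exact h)
        · exact Or.inr ⟨by show (k : ℤ) + 1 = (n : ℤ); exact h,
            by show (0 : G) + 0 ≤ 0; rw [add_zero]⟩
      have hval : GammaInterval.gadd (ZLex.mk (n : ℤ) (0 : G)) hu ek e1 =
          ⟨ZLex.mk ((k + 1 : ℕ) : ℤ) (0 : G), hm⟩ := by
        apply Subtype.ext
        rw [GammaInterval.gadd_val _ hu hD]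
        show ZLex.mk (k : ℤ) (0 : G) + ZLex.mk 1 0 = ZLex.mk ((k + 1 : ℕ) : ℤ) (0 : G)
        rw [ZLex.add_def]
        show ZLex.mk ((k : ℤ) + 1) ((0 : G) + 0) = ZLex.mk ((k + 1 : ℕ) : ℤ) (0 : G)
        rw [add_zero]
        norm_cast
      have := hadd ek e1 hD
      rw [stmt17_add_eq] at this; rw [hval] at this
      rw [this, ih hmk]
      push_cast
      ring
  have memn : 0 ≤ ZLex.mk (n : ℤ) (0 : G) ∧ ZLex.mk (n : ℤ) (0 : G) ≤ ZLex.mk (n : ℤ) (0 : G) :=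
    ⟨hu, le_refl _⟩
  have hs1 : s e1 = 1 / (n : ℝ) := by
    have h1 : (⟨ZLex.mk (n : ℤ) (0 : G), memn⟩ : GammaSet (ZLex.mk (n : ℤ) (0 : G))) =
        (GammaInterval.Gamma (ZLex.mk (n : ℤ) (0 : G)) hu).one := rfl
    have h2 := hDk n memn
    rw [h1, ho] at h2
    field_simp
    linarith [h2]
  -- conclusion
  intro x
  rcases lt_or_eq_of_le (idxn x) with hlt | heq
  · have hnn := idx0 x
    have hmx : 0 ≤ ZLex.mk (ZLex.idx x.1) (0 : G) ∧
        ZLex.mk (ZLex.idx x.1) (0 : G) ≤ ZLex.mk (n : ℤ) (0 : G) :=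
      stmt17_mem _ _ (hnn.lt_or_eq.elim Or.inl (fun e => Or.inr ⟨e, le_refl 0⟩)) (Or.inl hlt)
    have hc : ∃ c : G, ZLex.snd x.1 ≤ c ∧ (0 : G) ≤ c := by
      obtain ⟨c, hc1, hc2⟩ := hdir (ZLex.snd x.1) 0
      exact ⟨c, hc1, hc2⟩
    obtain ⟨c, hcx, hc0⟩ := hc
    have hmc : 0 ≤ ZLex.mk (ZLex.idx x.1) c ∧
        ZLex.mk (ZLex.idx x.1) c ≤ ZLex.mk (n : ℤ) (0 : G) :=
      stmt17_mem _ _ (hnn.lt_or_eq.elim Or.inl (fun e => Or.inr ⟨e, hc0⟩)) (Or.inl hlt)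
    -- s x = s (idx x, c)
    have hx1 := key x hlt c hcx hmc
    -- s (idx x, 0) = s (idx x, c): apply key to z := (idx x, 0)
    have hz1 : s ⟨ZLex.mk (ZLex.idx x.1) c, hmc⟩ =
        s ⟨ZLex.mk (ZLex.idx x.1) (0 : G), hmx⟩ :=
      key ⟨ZLex.mk (ZLex.idx x.1) (0 : G), hmx⟩ hlt c hc0 hmc
    -- value via hDk
    set k : ℕ := (ZLex.idx x.1).toNat with hkdef
    have hki : (k : ℤ) = ZLex.idx x.1 := Int.toNat_of_nonneg hnn
    have hmz' : 0 ≤ ZLex.mk (k : ℤ) (0 : G) ∧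
        ZLex.mk (k : ℤ) (0 : G) ≤ ZLex.mk (n : ℤ) (0 : G) := by rw [hki]; exact hmx
    have hze : (⟨ZLex.mk (ZLex.idx x.1) (0 : G), hmx⟩ : GammaSet (ZLex.mk (n : ℤ) (0 : G))) =
        ⟨ZLex.mk (k : ℤ) (0 : G), hmz'⟩ := by
      apply Subtype.ext
      show ZLex.mk (ZLex.idx x.1) (0 : G) = ZLex.mk (k : ℤ) (0 : G)
      rw [hki]
    have hsx : s x = (k : ℝ) * s e1 := by
      rw [← hx1, hz1, hze, hDk k hmz']
    rw [hsx, hs1]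
    have : ((ZLex.idx x.1 : ℤ) : ℝ) = (k : ℝ) := by
      rw [← hki]; push_cast; ring
    rw [this]; ring
  · rw [hB x heq, heq]
    field_simp
    norm_cast

lemma stmt17_std_state (n : ℕ) (hn : 1 ≤ n)
    (hu : (0 : ZLex G) ≤ ZLex.mk (n : ℤ) (0 : G)) :
    (GammaInterval.Gamma (ZLex.mk (n : ℤ) (0 : G)) hu).IsState
      (fun x => (ZLex.idx x.1 : ℝ) / (n : ℝ)) := by
  have hnR : (0 : ℝ) < (n : ℝ) := by exact_mod_cast Nat.pos_of_ne_zero (by omega)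
  have idx0 : ∀ x : GammaSet (ZLex.mk (n : ℤ) (0 : G)), (0 : ℤ) ≤ ZLex.idx x.1 := by
    intro x
    rcases x.2.1 with h | ⟨h, _⟩
    · exact le_of_lt h
    · exact le_of_eq h
  have idxn : ∀ x : GammaSet (ZLex.mk (n : ℤ) (0 : G)), ZLex.idx x.1 ≤ (n : ℤ) := by
    intro x
    rcases x.2.2 with h | ⟨h, _⟩
    · exact le_of_lt h
    · exact le_of_eq h
  refine ⟨?_, ?_, ?_, ?_⟩
  · show ((0 : ℤ) : ℝ) / (n : ℝ) = 0
    simp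
  · show (((n : ℤ) : ℝ)) / (n : ℝ) = 1
    push_cast
    field_simp
  · intro a
    constructor
    · apply div_nonneg _ (le_of_lt hnR)
      exact_mod_cast idx0 a
    · rw [div_le_one hnR]
      exact_mod_cast idxn a
  · intro a b h
    show (ZLex.idx (GammaInterval.gadd _ hu a b).1 : ℝ) / (n : ℝ) = _
    rw [GammaInterval.gadd_val _ hu h]
    have : ZLex.idx (a.1 + b.1) = ZLex.idx a.1 + ZLex.idx b.1 := rfl
    rw [this]
    push_cast
    ring

end Stmt17Aux

/-- for a directed po-group `G`, the PEA `Γ(ℤ ⃗× G, (n,0))`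
admits exactly one state, namely `s(i,g) = i/n`, and this state is an
`(n+1)`-valued discrete state (and hence extremal). -/
theorem stmt17 (G : Type) [AddGroup G] [PartialOrder G]
    [CovariantClass G G (· + ·) (· ≤ ·)]
    [CovariantClass G G (Function.swap (· + ·)) (· ≤ ·)]
    (hdir : ∀ a b : G, ∃ c : G, a ≤ c ∧ b ≤ c)
    (n : ℕ) (hn : 1 ≤ n)
    (P : PEA (GammaSet (ZLex.mk (n : ℤ) (0 : G))))
    (hP : P = GammaInterval.Gamma (ZLex.mk (n : ℤ) (0 : G)) (by exact Or.inl (show (0 : ℤ) < (n : ℤ) by exact_mod_cast hn))) :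
    (∃! s : GammaSet (ZLex.mk (n : ℤ) (0 : G)) → ℝ, P.IsState s) ∧
    ∀ s : GammaSet (ZLex.mk (n : ℤ) (0 : G)) → ℝ, P.IsState s →
      (∀ x, s x = (ZLex.idx x.1 : ℝ) / (n : ℝ)) ∧
      P.IsDiscreteState n s ∧ P.IsExtremalState s := by
  subst hP
  set hu : (0 : ZLex G) ≤ ZLex.mk (n : ℤ) (0 : G) :=
    Or.inl (show (0 : ℤ) < (n : ℤ) by exact_mod_cast hn) with hudef
  set s₀ : GammaSet (ZLex.mk (n : ℤ) (0 : G)) → ℝ :=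
    fun x => (ZLex.idx x.1 : ℝ) / (n : ℝ) with hs₀def
  have hstate : (GammaInterval.Gamma (ZLex.mk (n : ℤ) (0 : G)) hu).IsState s₀ :=
    stmt17_std_state n hn hu
  have huniq : ∀ s, (GammaInterval.Gamma (ZLex.mk (n : ℤ) (0 : G)) hu).IsState s →
      ∀ x, s x = (ZLex.idx x.1 : ℝ) / (n : ℝ) :=
    fun s hs => stmt17_unique hdir n hn hu s hs
  have heq : ∀ s, (GammaInterval.Gamma (ZLex.mk (n : ℤ) (0 : G)) hu).IsState s → s = s₀ :=
    fun s hs => funext fun x => huniq s hs x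
  constructor
  · exact ⟨s₀, hstate, fun s hs => heq s hs⟩
  · intro s hs
    refine ⟨huniq s hs, ⟨hs, ?_⟩, hs, ?_⟩
    · -- range
      ext r
      simp only [Set.mem_range, Set.mem_setOf_eq]
      constructor
      · rintro ⟨x, rfl⟩
        have h0 : (0 : ℤ) ≤ ZLex.idx x.1 := by
          rcases x.2.1 with h | ⟨h, _⟩
          · exact le_of_lt h
          · exact le_of_eq h
        have h1 : ZLex.idx x.1 ≤ (n : ℤ) := by
          rcases x.2.2 with h | ⟨h, _⟩
          · exact le_of_lt h
          · exact le_of_eq h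
        refine ⟨(ZLex.idx x.1).toNat, ?_, ?_⟩
        · omega
        · rw [huniq s hs x]
          congr 1
          exact_mod_cast (Int.toNat_of_nonneg h0).symm
      · rintro ⟨i, hi, rfl⟩
        have hmem : 0 ≤ ZLex.mk (i : ℤ) (0 : G) ∧
            ZLex.mk (i : ℤ) (0 : G) ≤ ZLex.mk (n : ℤ) (0 : G) :=
          stmt17_mem _ _
            ((Int.natCast_nonneg i).lt_or_eq.elim Or.inl (fun e => Or.inr ⟨e, le_refl 0⟩))
            (by
              rcases lt_or_eq_of_le (show (i : ℤ) ≤ (n : ℤ) by exact_mod_cast hi) with h | h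
              · exact Or.inl h
              · exact Or.inr ⟨h, le_refl 0⟩)
        refine ⟨⟨ZLex.mk (i : ℤ) (0 : G), hmem⟩, ?_⟩
        refine (huniq s hs _).trans ?_
        show (((i : ℤ) : ℝ)) / (n : ℝ) = (i : ℝ) / (n : ℝ)
        push_cast
        ring
    · -- extremal
      intro s₁ s₂ α h₁ h₂ hα hα1 hdec
      have e1 : s₁ = s₀ := heq s₁ h₁
      have e2 : s₂ = s₀ := heq s₂ h₂
      have e : s = s₀ := heq s hs
      exact ⟨e1.trans e.symm, e2.trans e.symm⟩
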